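/- Let G be a partially directed graph on a finite vertex set V that is strictly acyclic and satisfies: whenever I→J is a directed edge and J—K is an undirected edge of G, the vertices I and K are adjacent. Let D ∈ [G]. Given finite nonempty sets 𝒳_i for i∈V and a strictly positive pmf p on ∏_{i∈V}𝒳_i that factorizes according to D, then p also admits the chain-graph outer factorization of G: for every configuration v, p(v) = ∏_{τ} p(v_τ | v_{Pa_G(τ)}), where the product runs over the chain components τ of G. -/

import Mathlib

open scoped Classical

/-- A partially directed graph on vertex type `V`: directed edges `dir i j` (i→j) and
undirected edges `undir i j` (i—j), with at most one edge between any two vertices. -/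
structure PDG (V : Type) where
  dir : V → V → Prop
  undir : V → V → Prop
  undir_symm : ∀ i j, undir i j → undir j i
  undir_irrefl : ∀ i, ¬ undir i i
  dir_irrefl : ∀ i, ¬ dir i i
  not_dir_dir : ∀ i j, dir i j → ¬ dir j i
  not_dir_undir : ∀ i j, dir i j → ¬ undir i j

namespace PDG

variable {V : Type}

/-- Adjacency: joined by some edge. -/
def Adj (G : PDG V) (i j : V) : Prop := G.dir i j ∨ G.dir j i ∨ G.undir i j

/-- A semi-directed step from `i` to `j`: an undirected edge or a directed edge `i→j`. -/
def SStep (G : PDG V) (i j : V) : Prop := G.dir i j ∨ G.undir i j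

/-- Existence of a semi-directed cycle: `f 0, …, f m` with `f 0 = f m`, `m ≥ 2`,
each consecutive pair a semi-directed step, at least one step directed. -/
def HasSemiDirectedCycle (G : PDG V) : Prop :=
  ∃ (m : ℕ) (f : ℕ → V), 2 ≤ m ∧ f 0 = f m ∧
    (∀ i < m, G.SStep (f i) (f (i + 1))) ∧ (∃ i < m, G.dir (f i) (f (i + 1)))

/-- Strictly acyclic: no semi-directed cycle. -/
def StrictlyAcyclic (G : PDG V) : Prop := ¬ G.HasSemiDirectedCycle

/-- Joined by a path of undirected edges (possibly trivial). -/
def sameChain (G : PDG V) (i j : V) : Prop := Relation.ReflTransGen G.undir i j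

/-- The chain component of a vertex. -/
def chainComp (G : PDG V) (i : V) : Set V := {j | G.sameChain i j}

/-- Parents of a vertex set. -/
def Pa (G : PDG V) (D : Set V) : Set V := {i | ∃ d ∈ D, G.dir i d}

/-- Ancestors of a vertex set (directed path, possibly of length 0). -/
def An (G : PDG V) (D : Set V) : Set V := {i | ∃ d ∈ D, Relation.ReflTransGen G.dir i d}

/-- A DAG: only directed edges, and no directed cycles. -/
def IsDAG (G : PDG V) : Prop :=
  (∀ i j, ¬ G.undir i j) ∧ ∀ i, ¬ Relation.TransGen G.dir i i

/-- Unshielded collider `(i, k, j)`: `i→k ← j` with `i`, `j` distinct and non-adjacent. -/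
def UC (G : PDG V) (i k j : V) : Prop :=
  i ≠ j ∧ G.dir i k ∧ G.dir j k ∧ ¬ G.Adj i j

/-- `D ∈ [G]`: `D` is a DAG with the same skeleton as `G`, containing every directed edge
of `G`, all of whose unshielded colliders are unshielded colliders of `G`. -/
def InClass (D G : PDG V) : Prop :=
  D.IsDAG ∧ (∀ i j, D.Adj i j ↔ G.Adj i j) ∧ (∀ i j, G.dir i j → D.dir i j) ∧
    (∀ i k j, D.UC i k j → G.UC i k j)

/-- `C` is a nonempty set, connected by undirected edges within `C`, receiving a directed
edge from `I` and one from `J`. -/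
def ComplexCand (G : PDG V) (I : V) (C : Set V) (J : V) : Prop :=
  C.Nonempty ∧
  (∀ a ∈ C, ∀ b ∈ C,
    Relation.ReflTransGen (fun x y => G.undir x y ∧ x ∈ C ∧ y ∈ C) a b) ∧
  (∃ c ∈ C, G.dir I c) ∧ (∃ c ∈ C, G.dir J c)

/-- Minimal complex `(I, C, J)` of `G`. -/
def MinimalComplex (G : PDG V) (I : V) (C : Set V) (J : V) : Prop :=
  I ≠ J ∧ ¬ G.Adj I J ∧ (∀ a ∈ C, ∀ b ∈ C, G.sameChain a b) ∧
  G.ComplexCand I C J ∧ ∀ C' ⊂ C, ¬ G.ComplexCand I C' J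

/-- Remove all directed edges pointing into `S`. -/
def removeInto (G : PDG V) (S : Set V) : PDG V where
  dir i j := G.dir i j ∧ j ∉ S
  undir := G.undir
  undir_symm := G.undir_symm
  undir_irrefl := G.undir_irrefl
  dir_irrefl i h := G.dir_irrefl i h.1
  not_dir_dir i j h h' := G.not_dir_dir i j h.1 h'.1
  not_dir_undir i j h h' := G.not_dir_undir i j h.1 h'

/-- Induced subgraph on the vertex set `D` (kept on the same vertex type; edges
outside `D` are discarded). -/
def induce (G : PDG V) (D : Set V) : PDG V where
  dir i j := G.dir i j ∧ i ∈ D ∧ j ∈ D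
  undir i j := G.undir i j ∧ i ∈ D ∧ j ∈ D
  undir_symm i j h := ⟨G.undir_symm i j h.1, h.2.2, h.2.1⟩
  undir_irrefl i h := G.undir_irrefl i h.1
  dir_irrefl i h := G.dir_irrefl i h.1
  not_dir_dir i j h h' := G.not_dir_dir i j h.1 h'.1
  not_dir_undir i j h h' := G.not_dir_undir i j h.1 h'.1

/-- `G(↛X)`: `G` with every directed edge into `X ∩ An_G(Y)` removed. -/
def noInto (G : PDG V) (X Y : Set V) : PDG V := G.removeInto (X ∩ G.An Y)

/-- `RM(G; X, Y)`: the induced subgraph of `G(↛X)` on `An_{G(↛X)}(Y)`. -/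
def RM (G : PDG V) (X Y : Set V) : PDG V :=
  (G.noInto X Y).induce ((G.noInto X Y).An Y)

/-- There is a proper semi-directed path from `X` to `Y` starting with an undirected
edge: distinct vertices `f 0 ∈ X, …, f m ∈ Y`, only `f 0` in `X`, each consecutive pair a
semi-directed step, the first edge undirected. -/
def HasProperUndirStartPath (G : PDG V) (X Y : Set V) : Prop :=
  ∃ (m : ℕ) (f : ℕ → V), 1 ≤ m ∧
    (∀ i ≤ m, ∀ j ≤ m, f i = f j → i = j) ∧
    f 0 ∈ X ∧ f m ∈ Y ∧ (∀ i < m, G.SStep (f i) (f (i + 1))) ∧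
    (∀ i, 1 ≤ i → i ≤ m → f i ∉ X) ∧ G.undir (f 0) (f 1)

/-- Membership in the chain decomposition `CD_G(D)`: the nonempty intersections of `D`
with chain components of `G`. -/
def CDmem (G : PDG V) (D S : Set V) : Prop :=
  S.Nonempty ∧ ∃ i, S = D ∩ G.chainComp i

end PDG

noncomputable section Prob

open PDG

variable {V : Type} [Fintype V] [DecidableEq V] {𝒳 : V → Type} [∀ i, Fintype (𝒳 i)]
  [∀ i, Nonempty (𝒳 i)]

/-- Marginal `p_S(v_S)`: sum of `p` over configurations agreeing with `v` on `S`. -/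
def marginal (p : (∀ i, 𝒳 i) → ℝ) (S : Set V) (v : ∀ i, 𝒳 i) : ℝ :=
  ∑ w : ∀ i, 𝒳 i, if ∀ i ∈ S, w i = v i then p w else 0

/-- Conditional `p(v_A | v_S) = p_{A∪S}(v_{A∪S}) / p_S(v_S)`. -/
def condP (p : (∀ i, 𝒳 i) → ℝ) (A S : Set V) (v : ∀ i, 𝒳 i) : ℝ :=
  marginal p (A ∪ S) v / marginal p S v

/-- A strictly positive pmf. -/
def IsPositivePMF (p : (∀ i, 𝒳 i) → ℝ) : Prop :=
  (∀ v, 0 < p v) ∧ ∑ v : ∀ i, 𝒳 i, p v = 1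

/-- `p` factorizes according to the DAG `D`. -/
def FactorizesDAG (p : (∀ i, 𝒳 i) → ℝ) (D : PDG V) : Prop :=
  ∀ v, p v = ∏ i : V, condP p {i} (D.Pa {i}) v

/-- The (finitely many) chain components of `G`. -/
def chainComponents (G : PDG V) : Finset (Set V) :=
  Finset.univ.image (fun i => G.chainComp i)

/-- The outer chain-graph factorization `∏_τ p(v_τ | v_{Pa_G(τ)})` over chain
components `τ` of `G`. -/
def chainProd (G : PDG V) (p : (∀ i, 𝒳 i) → ℝ) (v : ∀ i, 𝒳 i) : ℝ :=
  ∏ τ ∈ chainComponents G, condP p τ (G.Pa τ) v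

/-- The product `∏_j p(v_{D_j} | v_{Pa_G(D_j)})` over the chain decomposition
`CD_G(D) = {D_1,…,D_k}` (empty intersections contribute a factor `1`). -/
def cdProd (G : PDG V) (p : (∀ i, 𝒳 i) → ℝ) (D : Set V) (v : ∀ i, 𝒳 i) : ℝ :=
  ∏ τ ∈ chainComponents G, condP p (D ∩ τ) (G.Pa (D ∩ τ)) v

/-- The identification formula (g-formula) of Perković's theorem:
`Σ_b ∏_j p(b_j | pa_G(B_j))` where `{B_1,…,B_k} = CD_G(An_{G_{V∖X}}(Y))`,
the sum running over configurations of `B = An_{G_{V∖X}}(Y) ∖ Y`, all other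
coordinates (in particular the intervened values on `X` and the values on `Y`)
being fixed by `v`. -/
def gFormula (G : PDG V) (p : (∀ i, 𝒳 i) → ℝ) (X Y : Set V) (v : ∀ i, 𝒳 i) : ℝ :=
  ∑ w : ∀ i, 𝒳 i,
    if ∀ i, i ∉ (G.induce Xᶜ).An Y \ Y → w i = v i then
      cdProd G p ((G.induce Xᶜ).An Y) w
    else 0

/-- The re-weighting formula `Σ_{v'} p(v) / ∏_j p(x_j | pa_G(X_j))`, where
`{X_1,…,X_m} = CD_G(X ∩ An_G(Y))` and the sum runs over configurations of
`V ∖ (X ∪ Y)`, the coordinates on `X ∪ Y` being fixed by `v`. -/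
def rwFormula (G : PDG V) (p : (∀ i, 𝒳 i) → ℝ) (X Y : Set V) (v : ∀ i, 𝒳 i) : ℝ :=
  ∑ w : ∀ i, 𝒳 i,
    if ∀ i ∈ X ∪ Y, w i = v i then p w / cdProd G p (X ∩ G.An Y) w else 0

/-- The `Y`-marginal of the truncated factorization of `p` with respect to the DAG `D`:
`Σ_{v_{V∖(X∪Y)}} ∏_{i ∈ V∖X} p(v_i | v_{Pa_D(i)})`, the coordinates on `X ∪ Y` being
fixed by `v`. -/
def truncMarg (D : PDG V) (p : (∀ i, 𝒳 i) → ℝ) (X Y : Set V) (v : ∀ i, 𝒳 i) : ℝ :=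
  ∑ w : ∀ i, 𝒳 i,
    if ∀ i ∈ X ∪ Y, w i = v i then
      ∏ i ∈ Finset.univ.filter (fun i => i ∉ X), condP p {i} (D.Pa {i}) w
    else 0

end Prob

set_option linter.unusedSectionVars false
set_option maxHeartbeats 1000000

noncomputable section ProbX
variable {V : Type} [Fintype V] [DecidableEq V] {𝒳 : V → Type} [∀ i, Fintype (𝒳 i)]
  [∀ i, Nonempty (𝒳 i)]

lemma marginal_pos {p : (∀ i, 𝒳 i) → ℝ} (hp : ∀ v, 0 < p v) (S : Set V) (v : ∀ i, 𝒳 i) :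
    0 < marginal p S v := by
  apply Finset.sum_pos'
  · intro w _; split <;> [exact (hp w).le; rfl]
  · exact ⟨v, Finset.mem_univ v, by simp [hp v]⟩

lemma marginal_congr {p : (∀ i, 𝒳 i) → ℝ} {S : Set V} {v v' : ∀ i, 𝒳 i}
    (h : ∀ i ∈ S, v i = v' i) : marginal p S v = marginal p S v' := by
  unfold marginal
  refine Finset.sum_congr rfl fun w _ => ?_
  congr 1
  simp only [eq_iff_iff]
  constructor <;> intro hw i hi
  · rw [hw i hi, h i hi]
  · rw [hw i hi, h i hi]

lemma marginal_univ {p : (∀ i, 𝒳 i) → ℝ} (v : ∀ i, 𝒳 i) :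
    marginal p (Set.univ : Set V) v = p v := by
  unfold marginal
  rw [Finset.sum_eq_single v]
  · simp
  · intro w _ hw
    rw [if_neg]
    intro h
    exact hw (funext fun i => h i trivial)
  · simp

lemma marginal_sum_update {p : (∀ i, 𝒳 i) → ℝ} {S : Set V} {i : V} (hi : i ∉ S)
    (v : ∀ i, 𝒳 i) :
    marginal p S v = ∑ x : 𝒳 i, marginal p ({i} ∪ S) (Function.update v i x) := by
  unfold marginal
  rw [Finset.sum_comm]
  refine Finset.sum_congr rfl fun w _ => ?_
  rw [Finset.sum_eq_single (w i)]
  · congr 1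
    simp only [eq_iff_iff, Set.mem_union, Set.mem_singleton_iff]
    constructor
    · intro h j hj
      rcases hj with hj | hj
      · subst hj; simp [Function.update]
      · have hji : j ≠ i := fun e => hi (e ▸ hj)
        rw [Function.update_of_ne hji (w i) v]
        exact h j hj
    · intro h j hj
      have hji : j ≠ i := fun e => hi (e ▸ hj)
      have := h j (Or.inr hj)
      rwa [Function.update_of_ne hji (w i) v] at this
  · intro x _ hx
    rw [if_neg]
    intro h
    have := h i (Or.inl rfl)
    rw [Function.update_self] at this
    exact hx this.symm
  · simp

lemma marginal_eq_sum_marginal {p : (∀ i, 𝒳 i) → ℝ} {S A : Set V} (hSA : S ⊆ A)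
    (v : ∀ i, 𝒳 i) :
    marginal p S v =
      ∑ w : ∀ i, 𝒳 i, if ∀ i ∈ S ∪ Aᶜ, w i = v i then marginal p A w else 0 := by
  have key : ∀ w : ∀ i, 𝒳 i,
      (if ∀ i ∈ S ∪ Aᶜ, w i = v i then marginal p A w else 0)
      = ∑ u : ∀ i, 𝒳 i, if (∀ i ∈ S ∪ Aᶜ, w i = v i) ∧ (∀ i ∈ A, u i = w i)
          then p u else 0 := by
    intro w
    split
    · next h =>
      unfold marginal
      refine Finset.sum_congr rfl fun u _ => ?_
      congr 1
      simp only [eq_iff_iff]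
      exact ⟨fun hp => ⟨h, hp⟩, fun hp => hp.2⟩
    · next h =>
      symm
      apply Finset.sum_eq_zero
      intro u _
      exact if_neg fun hc => h hc.1
  simp only [key]
  rw [Finset.sum_comm]
  unfold marginal
  refine Finset.sum_congr rfl fun u _ => ?_
  -- inner sum over w
  by_cases hu : ∀ i ∈ S, u i = v i
  · rw [if_pos hu]
    -- canonical w₀
    set w₀ : ∀ i, 𝒳 i := fun i => if i ∈ A then u i else v i with hw₀
    rw [Finset.sum_eq_single w₀]
    · rw [if_pos]
      constructor
      · intro i hi
        rcases hi with hi | hi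
        · simp only [hw₀]
          rw [if_pos (hSA hi)]
          exact hu i hi
        · simp only [hw₀]
          rw [if_neg hi]
      · intro i hi
        simp only [hw₀]
        rw [if_pos hi]
    · intro w _ hw
      rw [if_neg]
      rintro ⟨h1, h2⟩
      apply hw
      funext i
      by_cases hiA : i ∈ A
      · simp only [hw₀]; rw [if_pos hiA]; exact (h2 i hiA).symm
      · simp only [hw₀]; rw [if_neg hiA]; exact h1 i (Or.inr hiA)
    · simp
  · rw [if_neg hu]
    symm
    apply Finset.sum_eq_zero
    intro w _
    rw [if_neg]
    rintro ⟨h1, h2⟩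
    apply hu
    intro i hi
    exact (h2 i (hSA hi)).trans (h1 i (Or.inl hi))

lemma condP_congr {p : (∀ i, 𝒳 i) → ℝ} {A S : Set V} {v v' : ∀ i, 𝒳 i}
    (h : ∀ i ∈ A ∪ S, v i = v' i) : condP p A S v = condP p A S v' := by
  unfold condP
  rw [marginal_congr h, marginal_congr (fun i hi => h i (Or.inr hi))]

end ProbX

namespace PDG

variable {V : Type}

lemma sameChain_symm (G : PDG V) {a b : V} (h : G.sameChain a b) : G.sameChain b a := by
  induction h with
  | refl => exact Relation.ReflTransGen.refl
  | tail _ hcy ih =>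
    exact Relation.ReflTransGen.trans
      (Relation.ReflTransGen.single (G.undir_symm _ _ hcy)) ih

lemma mem_chainComp_self (G : PDG V) (i : V) : i ∈ G.chainComp i :=
  Relation.ReflTransGen.refl

lemma chainComp_eq_of_mem (G : PDG V) {i j : V} (h : j ∈ G.chainComp i) :
    G.chainComp j = G.chainComp i := by
  ext k
  constructor <;> intro hk
  · exact Relation.ReflTransGen.trans h hk
  · exact Relation.ReflTransGen.trans (G.sameChain_symm h) hk

lemma sameChain_of_mem_comp (G : PDG V) {i a b : V} (ha : a ∈ G.chainComp i)
    (hb : b ∈ G.chainComp i) : G.sameChain a b :=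
  Relation.ReflTransGen.trans (G.sameChain_symm ha) hb

lemma sstep_of_sameChain (G : PDG V) {a b : V} (h : G.sameChain a b) :
    Relation.ReflTransGen G.SStep a b := by
  unfold sameChain at h
  induction h with
  | refl => exact Relation.ReflTransGen.refl
  | tail _ hu ih => exact ih.tail (Or.inr hu)

lemma rtg_fun {α : Type*} {r : α → α → Prop} {x y : α} (h : Relation.ReflTransGen r x y) :
    ∃ (n : ℕ) (g : ℕ → α), g 0 = x ∧ g n = y ∧ ∀ i < n, r (g i) (g (i + 1)) := by
  induction h with
  | refl => exact ⟨0, fun _ => x, rfl, rfl, by omega⟩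
  | @tail c y _ hr ih =>
    obtain ⟨n, g, h0, hn, hs⟩ := ih
    refine ⟨n + 1, fun k => if k ≤ n then g k else y, by simp [h0], by simp, ?_⟩
    intro i hi
    by_cases hin : i < n
    · simpa [Nat.le_of_lt hin, Nat.succ_le_of_lt hin] using hs i hin
    · have : i = n := by omega
      subst this
      simpa [hn] using hr

lemma no_dir_back (G : PDG V) (hSA : G.StrictlyAcyclic) {a b : V} (hab : G.dir a b)
    (h : Relation.ReflTransGen G.SStep b a) : False := by
  obtain ⟨n, g, h0, hn, hs⟩ := rtg_fun h
  have hn0 : n ≠ 0 := by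
    rintro rfl
    rw [h0] at hn
    exact G.dir_irrefl a (hn ▸ hab)
  apply hSA
  refine ⟨n + 1, fun k => if k = 0 then a else g (k - 1), by omega, ?_, ?_, ⟨0, by omega, ?_⟩⟩
  · simp [hn]
  · intro i hi
    by_cases h0' : i = 0
    · subst h0'
      simpa [h0, PDG.SStep] using (Or.inl hab : G.dir a b ∨ G.undir a b)
    · have h1 : i - 1 < n := by omega
      have := hs (i - 1) h1
      have e1 : i - 1 + 1 = i := by omega
      rw [e1] at this
      simpa [h0', show i + 1 ≠ 0 by omega] using this
  · simpa [h0] using hab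

/-- Parents (in `D`) of a vertex of a chain component of `G` lie in the component or in
the `G`-parents of the component. -/
lemma paD_mem {G D : PDG V} (hD : D.InClass G) {i x j : V}
    (hx : x ∈ G.chainComp i) (hj : D.dir j x) :
    j ∈ G.chainComp i ∨ j ∈ G.Pa (G.chainComp i) := by
  have hadj : G.Adj j x := (hD.2.1 j x).mp (Or.inl hj)
  rcases hadj with hd | hd | hu
  · exact Or.inr ⟨x, hx, hd⟩
  · exact absurd (hD.2.2.1 x j hd) (D.not_dir_dir j x hj)
  · exact Or.inl (Relation.ReflTransGen.tail hx (G.undir_symm _ _ hu))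

end PDG

noncomputable section ProbY
open PDG
variable {V : Type} [Fintype V] [DecidableEq V] {𝒳 : V → Type} [∀ i, Fintype (𝒳 i)]
  [∀ i, Nonempty (𝒳 i)]

/-- Marginal over a `D`-ancestral set factorizes. -/
lemma anc_marginal (D : PDG V) (hDAG : D.IsDAG) (p : (∀ i, 𝒳 i) → ℝ)
    (hp : ∀ v, 0 < p v) (hfact : FactorizesDAG p D) :
    ∀ (n : ℕ) (A : Set V), (∀ i ∈ A, ∀ j, D.dir j i → j ∈ A) →
      (Finset.univ.filter (fun i => i ∉ A)).card ≤ n →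
      ∀ v, marginal p A v =
        ∏ i : V, if i ∈ A then condP p {i} (D.Pa {i}) v else 1 := by
  intro n
  induction n with
  | zero =>
    intro A hanc hcard v
    have hA : A = Set.univ := by
      ext i
      simp only [Set.mem_univ, iff_true]
      by_contra hi
      have hmem : i ∈ Finset.univ.filter (fun i => i ∉ A) := by simp [hi]
      have := Finset.card_pos.mpr ⟨i, hmem⟩
      omega
    subst hA
    rw [marginal_univ, hfact v]
    exact Finset.prod_congr rfl fun i _ => by rw [if_pos (Set.mem_univ i)]
  | succ n ih =>
    intro A hanc hcard v
    by_cases hAu : ∀ i, i ∈ A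
    · refine ih A hanc ?_ v
      have h0 : Finset.univ.filter (fun i => i ∉ A) = ∅ := by
        ext i; simp [hAu i]
      simp [h0]
    · push_neg at hAu
      obtain ⟨i₀, hi₀⟩ := hAu
      haveI : IsIrrefl V (Relation.TransGen D.dir) := ⟨hDAG.2⟩
      have hwf : WellFounded (Relation.TransGen D.dir) :=
        Finite.wellFounded_of_trans_of_irrefl _
      obtain ⟨i, hiS, hmin⟩ := hwf.has_min {j | j ∉ A} ⟨i₀, hi₀⟩
      have hiA : i ∉ A := hiS
      have hanc' : ∀ x ∈ ({i} ∪ A : Set V), ∀ j, D.dir j x → j ∈ ({i} ∪ A : Set V) := by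
        rintro x (rfl | hx) j hj
        · by_cases hjA : j ∈ A
          · exact Or.inr hjA
          · exact absurd (Relation.TransGen.single hj) (hmin j hjA)
        · exact Or.inr (hanc x hx j hj)
      have hIH := ih ({i} ∪ A) hanc' ?_
      rotate_left
      · refine Nat.lt_succ_iff.mp (lt_of_lt_of_le ?_ hcard)
        apply Finset.card_lt_card
        rw [Finset.ssubset_def]
        constructor
        · intro x hx
          simp only [Finset.mem_filter, Finset.mem_univ, true_and, Set.mem_union,
            Set.mem_singleton_iff] at hx ⊢
          exact fun h => hx (Or.inr h)
        · intro hsub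
          have hi' := hsub (Finset.mem_filter.mpr ⟨Finset.mem_univ i, hiA⟩)
          simp only [Finset.mem_filter, Finset.mem_univ, true_and, Set.mem_union,
            Set.mem_singleton_iff] at hi'
          exact hi' (Or.inl trivial)
      rotate_left
      -- main computation
      rw [marginal_sum_update hiA v]
      have hstep : ∀ x : 𝒳 i,
          marginal p ({i} ∪ A) (Function.update v i x)
            = condP p {i} (D.Pa {i}) (Function.update v i x)
              * ∏ j : V, if j ∈ A then condP p {j} (D.Pa {j}) v else 1 := by
        intro x
        rw [hIH (Function.update v i x)]
        rw [← Finset.mul_prod_erase Finset.univ _ (Finset.mem_univ i)]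
        rw [if_pos (Set.mem_union_left A rfl : i ∈ ({i} ∪ A : Set V))]
        congr 1
        rw [← Finset.mul_prod_erase Finset.univ
          (fun j => if j ∈ A then condP p {j} (D.Pa {j}) v else 1) (Finset.mem_univ i),
          if_neg hiA, one_mul]
        refine Finset.prod_congr rfl fun j hj => ?_
        have hji : j ≠ i := Finset.ne_of_mem_erase hj
        by_cases hjA : j ∈ A
        · rw [if_pos (Set.mem_union_right {i} hjA : j ∈ ({i} ∪ A : Set V)), if_pos hjA]
          refine condP_congr fun k hk => ?_
          have hkA : k ∈ A := by
            rcases hk with hk | hk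
            · rwa [Set.mem_singleton_iff.mp hk]
            · obtain ⟨d, hd, hdir⟩ := hk
              rw [Set.mem_singleton_iff.mp hd] at hdir
              exact hanc j hjA k hdir
          exact Function.update_of_ne (fun (e : k = i) => hiA (show i ∈ A from e ▸ hkA)) x v
        · rw [if_neg (by
            rintro (h | h)
            · exact hji (Set.mem_singleton_iff.mp h)
            · exact hjA h), if_neg hjA]
      simp only [hstep]
      rw [← Finset.sum_mul]
      have hsum1 : ∑ x : 𝒳 i, condP p {i} (D.Pa {i}) (Function.update v i x) = 1 := by
        have hiPa : i ∉ D.Pa {i} := by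
          rintro ⟨d, hd, hdir⟩
          rw [Set.mem_singleton_iff.mp hd] at hdir
          exact D.dir_irrefl i hdir
        unfold condP
        have hden : ∀ x : 𝒳 i,
            marginal p (D.Pa {i}) (Function.update v i x) = marginal p (D.Pa {i}) v := by
          intro x
          exact marginal_congr fun k hk =>
            Function.update_of_ne (fun (e : k = i) => hiPa (show i ∈ D.Pa {i} from e ▸ hk)) x v
        simp only [hden]
        rw [← Finset.sum_div, ← marginal_sum_update hiPa v]
        exact div_self (ne_of_gt (marginal_pos hp _ v))
      rw [hsum1, one_mul]

end ProbY

/-- If `G` is strictly acyclic with `I→J, J—K ⇒ I, K` adjacent, `D ∈ [G]`,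
and the strictly positive pmf `p` factorizes according to `D`, then `p` admits the outer
chain-graph factorization of `G`: `p(v) = ∏_τ p(v_τ | v_{Pa_G(τ)})` over the chain
components `τ` of `G`. -/
theorem stmt4 {V : Type} [Fintype V] [DecidableEq V] (G D : PDG V)
    (hSA : G.StrictlyAcyclic)
    (hMeek : ∀ I J K : V, G.dir I J → G.undir J K → G.Adj I K)
    (hD : D.InClass G)
    (𝒳 : V → Type) [∀ i, Fintype (𝒳 i)] [∀ i, Nonempty (𝒳 i)]
    (p : (∀ i, 𝒳 i) → ℝ) (hp : IsPositivePMF p)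
    (hfact : FactorizesDAG p D) :
    ∀ v : ∀ i, 𝒳 i, p v = chainProd G p v := by
  intro v
  classical
  obtain ⟨hp0, -⟩ := hp
  have hDAG := hD.1
  have hmemcx : ∀ x : V, x ∈ G.chainComp x := fun x => G.mem_chainComp_self x
  have hcxmem : ∀ x : V, G.chainComp x ∈ chainComponents G :=
    fun x => Finset.mem_image_of_mem _ (Finset.mem_univ x)
  have hcomp_rep : ∀ τ : {τ : Set V // τ ∈ chainComponents G}, ∃ y, τ.1 = G.chainComp y := by
    intro τ
    obtain ⟨y, -, hy⟩ := Finset.mem_image.mp τ.2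
    exact ⟨y, hy.symm⟩
  have huniq : ∀ (τ : {τ : Set V // τ ∈ chainComponents G}) (x : V),
      x ∈ τ.1 → τ.1 = G.chainComp x := by
    intro τ x hx
    obtain ⟨y, hy⟩ := hcomp_rep τ
    rw [hy] at hx ⊢
    exact (G.chainComp_eq_of_mem hx).symm
  have hconn : ∀ (τ : {τ : Set V // τ ∈ chainComponents G}) (a b : V),
      a ∈ τ.1 → b ∈ τ.1 → G.sameChain a b := by
    intro τ a b ha hb
    obtain ⟨y, hy⟩ := hcomp_rep τ
    rw [hy] at ha hb
    exact G.sameChain_of_mem_comp ha hb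
  -- the component digraph
  set step : {τ : Set V // τ ∈ chainComponents G} → {τ : Set V // τ ∈ chainComponents G} → Prop :=
    fun σ τ => ∃ a ∈ σ.1, ∃ b ∈ τ.1, G.dir a b with hstepdef
  have hreach : ∀ {σ τ}, Relation.ReflTransGen step σ τ →
      ∀ a ∈ σ.1, ∀ b ∈ τ.1, Relation.ReflTransGen G.SStep a b := by
    intro σ τ h
    induction h with
    | refl => exact fun a ha b hb => G.sstep_of_sameChain (hconn _ a b ha hb)
    | @tail ρ ρ' hσρ hρρ' ih =>
      intro a ha b hb
      obtain ⟨c, hc, d, hd, hcd⟩ := hρρ'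
      exact ((ih a ha c hc).tail (Or.inl hcd)).trans
        (G.sstep_of_sameChain (hconn _ d b hd hb))
  haveI : IsRefl {τ : Set V // τ ∈ chainComponents G} (Relation.ReflTransGen step) :=
    ⟨fun _ => Relation.ReflTransGen.refl⟩
  haveI : IsTrans {τ : Set V // τ ∈ chainComponents G} (Relation.ReflTransGen step) :=
    ⟨fun _ _ _ => Relation.ReflTransGen.trans⟩
  haveI : IsAntisymm {τ : Set V // τ ∈ chainComponents G} (Relation.ReflTransGen step) := by
    refine ⟨fun σ τ hστ hτσ => ?_⟩
    rcases Relation.ReflTransGen.cases_head hστ with heq | ⟨ρ, ⟨a, ha, b, hb, hab⟩, hρτ⟩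
    · exact heq
    · exact absurd (hreach (hρτ.trans hτσ) b hb a ha) (fun hr => G.no_dir_back hSA hab hr)
  haveI : IsPreorder {τ : Set V // τ ∈ chainComponents G} (Relation.ReflTransGen step) := {}
  haveI : IsPartialOrder {τ : Set V // τ ∈ chainComponents G} (Relation.ReflTransGen step) := {}
  obtain ⟨le, hlin, hle⟩ := extend_partialOrder (Relation.ReflTransGen step)
  haveI := hlin
  set B : {τ : Set V // τ ∈ chainComponents G} → Set V :=
    fun τ => {x | ∃ σ, le σ τ ∧ σ ≠ τ ∧ x ∈ σ.1} with hBdef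
  have hdisjBt : ∀ (τ) (x : V), x ∈ B τ → x ∉ τ.1 := by
    rintro τ x ⟨σ, hleσ, hne, hx⟩ hxτ
    exact hne (Subtype.ext ((huniq σ x hx).trans (huniq τ x hxτ).symm))
  have hPaB : ∀ τ, G.Pa τ.1 ⊆ B τ := by
    rintro τ j ⟨d, hd, hdir⟩
    have hne : (⟨G.chainComp j, hcxmem j⟩ : {τ : Set V // τ ∈ chainComponents G}) ≠ τ := by
      intro heq
      have hjτ : j ∈ τ.1 := by rw [← heq]; exact hmemcx j
      exact G.no_dir_back hSA hdir (G.sstep_of_sameChain (hconn τ d j hd hjτ))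
    have hst : step ⟨G.chainComp j, hcxmem j⟩ τ := ⟨j, hmemcx j, d, hd, hdir⟩
    exact ⟨⟨G.chainComp j, hcxmem j⟩, hle _ _ (Relation.ReflTransGen.single hst), hne, hmemcx j⟩
  have hBmono : ∀ {σ τ}, le σ τ → σ ≠ τ → B σ ⊆ B τ := by
    rintro σ τ hleσ hne x ⟨ρ, hρσ, hρne, hx⟩
    refine ⟨ρ, IsTrans.trans _ _ _ hρσ hleσ, ?_, hx⟩
    intro heq
    exact hne (antisymm hleσ (heq ▸ hρσ))
  have hBanc : ∀ τ, ∀ x ∈ B τ, ∀ j, D.dir j x → j ∈ B τ := by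
    rintro τ x ⟨σ, hleσ, hne, hx⟩ j hj
    obtain ⟨y, hy⟩ := hcomp_rep σ
    rcases PDG.paD_mem hD (show x ∈ G.chainComp y by rw [← hy]; exact hx) hj with h | h
    · exact ⟨σ, hleσ, hne, by rw [hy]; exact h⟩
    · exact hBmono hleσ hne (hPaB σ (by rw [hy]; exact h))
  have hAanc : ∀ τ, ∀ x ∈ (B τ ∪ τ.1 : Set V), ∀ j, D.dir j x → j ∈ (B τ ∪ τ.1 : Set V) := by
    rintro τ x (hx | hx) j hj
    · exact Or.inl (hBanc τ x hx j hj)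
    · obtain ⟨y, hy⟩ := hcomp_rep τ
      rcases PDG.paD_mem hD (show x ∈ G.chainComp y by rw [← hy]; exact hx) hj with h | h
      · exact Or.inr (by rw [hy]; exact h)
      · exact Or.inl (hPaB τ (by rw [hy]; exact h))
  have hmarg : ∀ (S : Set V), (∀ x ∈ S, ∀ j, D.dir j x → j ∈ S) → ∀ w,
      marginal p S w = ∏ i : V, if i ∈ S then condP p {i} (D.Pa {i}) w else 1 :=
    fun S hS w => anc_marginal D hDAG p hp0 hfact (Fintype.card V) S hS
      (le_trans (Finset.card_filter_le _ _) (le_of_eq (Finset.card_univ))) w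
  -- per-component identity
  have perComp : ∀ τ : {τ : Set V // τ ∈ chainComponents G},
      condP p τ.1 (G.Pa τ.1) v = ∏ i : V, if i ∈ τ.1 then condP p {i} (D.Pa {i}) v else 1 := by
    intro τ
    have hPaDsub : ∀ i ∈ τ.1, ∀ k ∈ D.Pa {i}, k ∈ τ.1 ∨ k ∈ G.Pa τ.1 := by
      rintro i hi k ⟨d, hd, hdir⟩
      rw [Set.mem_singleton_iff.mp hd] at hdir
      obtain ⟨y, hy⟩ := hcomp_rep τ
      rcases PDG.paD_mem hD (show i ∈ G.chainComp y by rw [← hy]; exact hi) hdir with h | h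
      · exact Or.inl (by rw [hy]; exact h)
      · refine Or.inr ?_
        obtain ⟨d', hd', hdir'⟩ := h
        exact ⟨d', by rw [hy]; exact hd', hdir'⟩
    have hsub1 : τ.1 ∪ G.Pa τ.1 ⊆ (B τ ∪ τ.1 : Set V) := by
      rintro x (hx | hx)
      · exact Or.inr hx
      · exact Or.inl (hPaB τ hx)
    have hsub2 : G.Pa τ.1 ⊆ B τ := hPaB τ
    have hseteq : G.Pa τ.1 ∪ (B τ)ᶜ = (τ.1 ∪ G.Pa τ.1) ∪ (B τ ∪ τ.1 : Set V)ᶜ := by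
      ext x
      simp only [Set.mem_union, Set.mem_compl_iff]
      constructor
      · rintro (h | h)
        · exact Or.inl (Or.inr h)
        · by_cases hτ : x ∈ τ.1
          · exact Or.inl (Or.inl hτ)
          · exact Or.inr (by rintro (hB | hτ') <;> [exact h hB; exact hτ hτ'])
      · rintro ((h | h) | h)
        · exact Or.inr (fun hB => hdisjBt τ x hB h)
        · exact Or.inl h
        · exact Or.inr (fun hB => h (Or.inl hB))
    have hnum : marginal p (τ.1 ∪ G.Pa τ.1) v
        = (∏ i : V, if i ∈ τ.1 then condP p {i} (D.Pa {i}) v else 1)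
          * marginal p (G.Pa τ.1) v := by
      rw [marginal_eq_sum_marginal hsub1 v, marginal_eq_sum_marginal hsub2 v, Finset.mul_sum]
      refine Finset.sum_congr rfl fun w _ => ?_
      simp only [hseteq]
      by_cases h : ∀ i ∈ (τ.1 ∪ G.Pa τ.1) ∪ (B τ ∪ τ.1 : Set V)ᶜ, w i = v i
      · rw [if_pos h, if_pos h, hmarg _ (hAanc τ) w, hmarg _ (hBanc τ) w,
          ← Finset.prod_mul_distrib]
        refine Finset.prod_congr rfl fun i _ => ?_
        by_cases hB : i ∈ B τ
        · rw [if_pos (show i ∈ (B τ ∪ τ.1 : Set V) from Set.mem_union_left _ hB),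
            if_pos hB, if_neg (hdisjBt τ i hB), one_mul]
        · by_cases hτ : i ∈ τ.1
          · rw [if_pos (show i ∈ (B τ ∪ τ.1 : Set V) from Set.mem_union_right _ hτ),
              if_neg hB, if_pos hτ, mul_one]
            refine condP_congr fun k hk => ?_
            rcases hk with hk | hk
            · exact h k (Or.inl (Or.inl (Set.mem_singleton_iff.mp hk ▸ hτ)))
            · rcases hPaDsub i hτ k hk with h' | h'
              · exact h k (Or.inl (Or.inl h'))
              · exact h k (Or.inl (Or.inr h'))
          · rw [if_neg (show i ∉ (B τ ∪ τ.1 : Set V) by rintro (h'|h'); exacts [hB h', hτ h']),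
              if_neg hB, if_neg hτ, mul_one]
      · rw [if_neg h, if_neg h, mul_zero]
    show marginal p (τ.1 ∪ G.Pa τ.1) v / marginal p (G.Pa τ.1) v = _
    rw [hnum, mul_div_assoc, div_self (ne_of_gt (marginal_pos hp0 _ v)), mul_one]
  -- assembly
  have hfinal : ∏ τ ∈ (chainComponents G).attach, condP p τ.1 (G.Pa τ.1) v
      = ∏ i : V, condP p {i} (D.Pa {i}) v := by
    calc ∏ τ ∈ (chainComponents G).attach, condP p τ.1 (G.Pa τ.1) v
        = ∏ τ ∈ (chainComponents G).attach,
            ∏ i : V, (if i ∈ τ.1 then condP p {i} (D.Pa {i}) v else 1) :=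
          Finset.prod_congr rfl fun τ _ => perComp τ
      _ = ∏ i : V, ∏ τ ∈ (chainComponents G).attach,
            (if i ∈ τ.1 then condP p {i} (D.Pa {i}) v else 1) := Finset.prod_comm
      _ = ∏ i : V, condP p {i} (D.Pa {i}) v := by
          refine Finset.prod_congr rfl fun i _ => ?_
          rw [Finset.prod_eq_single (⟨G.chainComp i, hcxmem i⟩ :
            {τ : Set V // τ ∈ chainComponents G})]
          · rw [if_pos (hmemcx i)]
          · intro τ _ hne
            rw [if_neg]
            intro hiτ
            exact hne (Subtype.ext (huniq τ i hiτ))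
          · intro h
            exact absurd (Finset.mem_attach _ _) h
  rw [hfact v, chainProd, ← Finset.prod_attach (chainComponents G)
    (fun τ => condP p τ (G.Pa τ) v), hfinal]
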